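/- If F is a complete filtered vector space of finite type (i.e., each quotient F^n/F^{n+1} is finite dimensional) and f : F → G is a continuous linear map of filtered topological vector spaces, then the image of f is closed in G. -/

import Mathlib

variable {K V W : Type*} [Field K] [AddCommGroup V] [Module K V]

/-- A (decreasing) filtration on a vector space: `F 0` is everything, the `F n`
are decreasing, and their intersection is zero. -/
def IsFilt (F : ℕ → Submodule K V) : Prop :=
  F 0 = ⊤ ∧ (∀ n, F (n + 1) ≤ F n) ∧ (⨅ n, F n) = ⊥

/-- Convergence of a sequence in the filtration topology. -/
def TendstoFilt (F : ℕ → Submodule K V) (x : ℕ → V) (l : V) : Prop :=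
  ∀ n, ∃ m, ∀ i, m ≤ i → l - x i ∈ F n

/-- Cauchy sequences for the filtration topology. -/
def CauchyFilt (F : ℕ → Submodule K V) (x : ℕ → V) : Prop :=
  ∀ n, ∃ m, ∀ i j, m ≤ i → m ≤ j → x i - x j ∈ F n

/-- Completeness: every Cauchy sequence converges. -/
def CompleteFilt (F : ℕ → Submodule K V) : Prop :=
  ∀ x : ℕ → V, CauchyFilt F x → ∃ l, TendstoFilt F x l

/-- A subspace is closed in the filtration topology iff it contains all limits
of its convergent sequences. -/
def ClosedFilt (F : ℕ → Submodule K V) (B : Submodule K V) : Prop :=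
  ∀ (x : ℕ → V) (l : V), (∀ i, x i ∈ B) → TendstoFilt F x l → l ∈ B

/-- Finite type: each quotient `F n / F (n+1)` is finite dimensional. -/
def FiniteTypeFilt (F : ℕ → Submodule K V) : Prop :=
  ∀ n, FiniteDimensional K (↥(F n) ⧸ Submodule.comap (F n).subtype (F (n + 1)))

/-- Extension of finite-dimensional by finite-dimensional is finite-dimensional. -/
private lemma aux_fd_ext (S : Submodule K V)
    (h1 : FiniteDimensional K S) (h2 : FiniteDimensional K (V ⧸ S)) :
    FiniteDimensional K V := by
  have hr := Submodule.rank_quotient_add_rank S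
  rw [show FiniteDimensional K V = Module.Finite K V from rfl,
    ← Module.rank_lt_aleph0_iff, ← hr]
  exact Cardinal.add_lt_aleph0 (Module.rank_lt_aleph0 K _) (Module.rank_lt_aleph0 K _)

set_option synthInstance.maxHeartbeats 1000000 in
set_option maxHeartbeats 1000000 in
/-- If `F` is a complete filtered vector space of finite type and `f : F → G` is a
continuous linear map of filtered vector spaces, then the image of `f` is closed in `G`. -/
theorem stmt0 [AddCommGroup W] [Module K W]
    (F : ℕ → Submodule K V) (G : ℕ → Submodule K W) (f : V →ₗ[K] W)
    (hF : IsFilt F) (hFc : CompleteFilt F) (hFt : FiniteTypeFilt F)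
    (hG : IsFilt G)
    (hcont : ∀ n, ∃ m, ∀ x ∈ F m, f x ∈ G n) :
    ClosedFilt G (LinearMap.range f) := by
  obtain ⟨hF0, hFle, hFinf⟩ := hF
  obtain ⟨hG0, hGle, hGinf⟩ := hG
  have hFanti : Antitone F := antitone_nat_of_succ_le hFle
  have hGanti : Antitone G := antitone_nat_of_succ_le hGle
  intro x l hxB hxl
  -- approximating preimages
  have hc' : ∀ n : ℕ, ∃ cn : V, l - f cn ∈ G n := by
    intro n
    obtain ⟨m, hm⟩ := hxl n
    obtain ⟨cn, hcn⟩ := hxB m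
    exact ⟨cn, hcn ▸ hm m le_rfl⟩
  choose c hcG using hc'
  set Vn : ℕ → Submodule K V := fun n => (G n).comap f with hVndef
  have hVmem : ∀ {n : ℕ} {a : V}, a ∈ Vn n → f a ∈ G n := by
    intro n a ha
    simpa [hVndef, Submodule.mem_comap] using ha
  have hVanti : Antitone Vn := fun a b h => Submodule.comap_mono (hGanti h)
  have hcdiff : ∀ n n' : ℕ, n ≤ n' → c n' - c n ∈ Vn n := by
    intro n n' h
    have hfc : f (c n' - c n) = (l - f (c n)) - (l - f (c n')) := by
      rw [map_sub]; abel
    simp only [hVndef, Submodule.mem_comap, hfc]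
    exact (G n).sub_mem (hcG n) (hGanti h (hcG n'))
  -- finite dimensionality of V ⧸ F k
  have hfd : ∀ k, FiniteDimensional K (V ⧸ F k) := by
    intro k
    induction k with
    | zero =>
      haveI : Subsingleton (V ⧸ F 0) :=
        Submodule.Quotient.subsingleton_iff.mpr hF0
      infer_instance
    | succ k ih =>
      haveI := ih
      set q : (V ⧸ F (k + 1)) →ₗ[K] V ⧸ F k :=
        Submodule.mapQ (F (k + 1)) (F k) LinearMap.id (by simpa using hFle k) with hq
      have hker : LinearMap.ker q = (F k).map (F (k + 1)).mkQ := by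
        ext y
        obtain ⟨z, rfl⟩ := (F (k + 1)).mkQ_surjective y
        simp only [LinearMap.mem_ker, hq, Submodule.mkQ_apply, Submodule.mapQ_apply,
          LinearMap.id_apply, Submodule.mem_map, Submodule.Quotient.mk_eq_zero]
        constructor
        · intro h
          exact ⟨z, h, rfl⟩
        · rintro ⟨w, hw, hwz⟩
          have : z - w ∈ F (k + 1) := (Submodule.Quotient.eq _).mp hwz.symm
          have := hFle k this
          have hz : z = (z - w) + w := by abel
          rw [hz]
          exact (F k).add_mem this hw
      haveI hkerfd : FiniteDimensional K (LinearMap.ker q) := by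
        set g : ↥(F k) →ₗ[K] V ⧸ F (k + 1) := (F (k + 1)).mkQ.comp (F k).subtype with hg
        have hgker : LinearMap.ker g = Submodule.comap (F k).subtype (F (k + 1)) := by
          rw [hg, LinearMap.ker_comp, Submodule.ker_mkQ]
        haveI : FiniteDimensional K (↥(F k) ⧸ LinearMap.ker g) := by
          rw [hgker]; exact hFt k
        haveI : FiniteDimensional K (LinearMap.range g) :=
          LinearEquiv.finiteDimensional g.quotKerEquivRange
        have hk2 : LinearMap.ker q = LinearMap.range g := by
          rw [hker, hg, LinearMap.range_comp, Submodule.range_subtype]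
        rw [hk2]; infer_instance
      haveI : FiniteDimensional K (LinearMap.range q) := inferInstance
      exact aux_fd_ext (LinearMap.ker q) inferInstance
        (LinearEquiv.finiteDimensional q.quotKerEquivRange.symm)
  -- the double-indexed chain
  set T : ℕ → ℕ → Submodule K V := fun n k => Vn n ⊔ F k with hT
  have hTanti : ∀ (k : ℕ) {a b : ℕ}, a ≤ b → T b k ≤ T a k :=
    fun k a b h => sup_le_sup_right (hVanti h) _
  have hFleT : ∀ n k, F k ≤ T n k := fun n k => le_sup_right
  -- stabilization in n for each k
  have hstab : ∀ k, ∃ N, ∀ n, N ≤ n → T n k = T N k := by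
    intro k
    haveI := hfd k
    set g : ℕ → ℕ := fun n => Module.finrank K ((T n k).map (F k).mkQ) with hgdef
    refine ⟨Function.argmin g, fun n hn => ?_⟩
    set N := Function.argmin g with hNdef
    have hle : (T n k).map (F k).mkQ ≤ (T N k).map (F k).mkQ :=
      Submodule.map_mono (hTanti k hn)
    have heq : (T n k).map (F k).mkQ = (T N k).map (F k).mkQ := by
      refine Submodule.eq_of_le_of_finrank_eq hle (le_antisymm ?_ ?_)
      · exact Submodule.finrank_mono hle
      · exact Function.argmin_le g n
    have hc := congrArg (Submodule.comap (F k).mkQ) heq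
    rwa [Submodule.comap_map_mkQ, Submodule.comap_map_mkQ,
      sup_eq_right.mpr (hFleT n k), sup_eq_right.mpr (hFleT N k)] at hc
  choose N hNs using hstab
  -- one step of the successive approximation
  have step : ∀ (k : ℕ) (v : V), ∃ v' : V,
      (∃ a ∈ Vn (N k), v = c (N k) + a) →
        (∃ a ∈ Vn (N (k + 1)), v' = c (N (k + 1)) + a) ∧ v' - v ∈ F k := by
    intro k v
    by_cases hv : ∃ a ∈ Vn (N k), v = c (N k) + a
    · obtain ⟨a, ha, rfl⟩ := hv
      have hmem : c (N k) + a - c (N (k + 1)) ∈ T (N (k + 1)) k := by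
        rcases le_total (N (k + 1)) (N k) with h | h
        · have h1 : c (N k) - c (N (k + 1)) ∈ Vn (N (k + 1)) := hcdiff _ _ h
          have h2 : a ∈ Vn (N (k + 1)) := hVanti h ha
          have he : c (N k) + a - c (N (k + 1)) = (c (N k) - c (N (k + 1))) + a := by abel
          rw [he]
          exact Submodule.mem_sup_left (Submodule.add_mem _ h1 h2)
        · have h1 : c (N (k + 1)) - c (N k) ∈ Vn (N k) := hcdiff _ _ h
          have he : c (N k) + a - c (N (k + 1)) = a - (c (N (k + 1)) - c (N k)) := by abel
          have hmem' : c (N k) + a - c (N (k + 1)) ∈ Vn (N k) := by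
            rw [he]; exact Submodule.sub_mem _ ha h1
          rw [hNs k _ h]
          exact Submodule.mem_sup_left hmem'
      obtain ⟨a', ha', b', hb', hab⟩ := Submodule.mem_sup.mp hmem
      refine ⟨c (N (k + 1)) + a', fun _ => ⟨⟨a', ha', rfl⟩, ?_⟩⟩
      have he : c (N (k + 1)) + a' - (c (N k) + a) = -b' := by
        have : a' + b' = c (N k) + a - c (N (k + 1)) := hab
        have h2 : a' = c (N k) + a - c (N (k + 1)) - b' := by
          rw [← this]; abel
        rw [h2]; abel
      rw [he]
      exact Submodule.neg_mem _ hb'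
    · exact ⟨v, fun h => absurd h hv⟩
  choose vstep hvstep using step
  set v : ℕ → V := fun k => Nat.rec (c (N 0)) (fun k vk => vstep k vk) k with hvdef
  have hvsucc : ∀ k, v (k + 1) = vstep k (v k) := fun k => rfl
  have hinv : ∀ k, ∃ a ∈ Vn (N k), v k = c (N k) + a := by
    intro k
    induction k with
    | zero => exact ⟨0, Submodule.zero_mem _, by simp [hvdef]⟩
    | succ k ih =>
      rw [hvsucc k]
      exact (hvstep k (v k) ih).1
  have hdiffF : ∀ k, v (k + 1) - v k ∈ F k := by
    intro k
    rw [hvsucc k]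
    exact (hvstep k (v k) (hinv k)).2
  -- the key membership property
  have hkey : ∀ k n, v k - c n ∈ T n k := by
    intro k n
    obtain ⟨a, ha, hva⟩ := hinv k
    rcases le_total n (N k) with h | h
    · have h1 : c (N k) - c n ∈ Vn n := hcdiff _ _ h
      have h2 : a ∈ Vn n := hVanti h ha
      have he : v k - c n = (c (N k) - c n) + a := by rw [hva]; abel
      rw [he]
      exact Submodule.mem_sup_left (Submodule.add_mem _ h1 h2)
    · have h1 : c n - c (N k) ∈ Vn (N k) := hcdiff _ _ h
      have he : v k - c n = a - (c n - c (N k)) := by rw [hva]; abel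
      have hm : v k - c n ∈ Vn (N k) := by
        rw [he]; exact Submodule.sub_mem _ ha h1
      rw [hNs k n h]
      exact Submodule.mem_sup_left hm
  -- v is Cauchy
  have htel : ∀ n i j, n ≤ i → i ≤ j → v j - v i ∈ F n := by
    intro n i j hni hij
    induction j, hij using Nat.le_induction with
    | base => simp
    | succ j hj ih =>
      have h1 : v (j + 1) - v j ∈ F n := hFanti (hni.trans hj) (hdiffF j)
      have he : v (j + 1) - v i = (v (j + 1) - v j) + (v j - v i) := by abel
      rw [he]
      exact Submodule.add_mem _ h1 ih
  have hCauchy : CauchyFilt F v := by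
    intro n
    refine ⟨n, fun i j hi hj => ?_⟩
    rcases le_total i j with h | h
    · have := htel n i j hi h
      have he : v i - v j = -(v j - v i) := by abel
      rw [he]; exact Submodule.neg_mem _ this
    · exact htel n j i hj h
  obtain ⟨vlim, hvlim⟩ := hFc v hCauchy
  -- conclusion: f vlim = l
  have hfinal : ∀ n, l - f vlim ∈ G n := by
    intro n
    obtain ⟨k, hk⟩ := hcont n
    obtain ⟨m, hm⟩ := hvlim k
    set i := max m k with hi
    have h1 : vlim - v i ∈ F k := hm i (le_max_left _ _)
    have h2 : v i - c n ∈ Vn n ⊔ F k := by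
      have h2' : v i - c n ∈ T n i := hkey i n
      have hle : T n i ≤ Vn n ⊔ F k := by
        rw [hT]
        exact sup_le_sup_left (hFanti (le_max_right m k)) _
      exact hle h2'
    obtain ⟨a, ha, b, hb, hab⟩ := Submodule.mem_sup.mp h2
    have hab' : f a + f b = f (v i) - f (c n) := by
      rw [← map_add, hab, map_sub]
    have he : l - f vlim = (l - f (c n)) - f (vlim - v i) - (f a + f b) := by
      rw [hab', map_sub]; abel
    rw [he]
    exact Submodule.sub_mem _
      (Submodule.sub_mem _ (hcG n) (hk _ h1))
      (Submodule.add_mem _ (hVmem ha) (hk b hb))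
  have hmem : l - f vlim ∈ ⨅ n, G n := (Submodule.mem_iInf _).mpr hfinal
  rw [hGinf, Submodule.mem_bot, sub_eq_zero] at hmem
  exact ⟨vlim, hmem.symm⟩
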